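/- For integers 1 ≤ i < j ≤ r, n ≥ r, and k < l, the monomial x_k x_l lies in the set Inc_{r,n}(x_i x_j) (the image of x_i x_j under strictly increasing maps π: ℕ → ℕ with π(r) ≤ n) if and only if 0 ≤ k - i ≤ l - j ≤ n - r. -/
import Mathlib
set_option maxHeartbeats 1000000

open MvPolynomial

lemma strictMono_sub_le {f : ℕ → ℕ} (hf : StrictMono f) (a b : ℕ) (h : a ≤ b) :
    f a + (b - a) ≤ f b := by
  obtain ⟨d, rfl⟩ := Nat.exists_eq_add_of_le h
  induction d with
  | zero => simp
  | succ d ih =>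
    have := hf (show a + d < a + (d+1) by omega)
    omega

theorem mem_inc_orbit_iff (K : Type) [Field K] (r n i j k l : ℕ)
    (hi : 1 ≤ i) (hij : i < j) (hjr : j ≤ r) (hrn : r ≤ n) (hkl : k < l) :
    (X k * X l ∈
      {f : MvPolynomial ℕ K | ∃ π : ℕ → ℕ, StrictMono π ∧ π r ≤ n ∧
        f = X (π i) * X (π j)}) ↔
      (i ≤ k ∧ k + j ≤ l + i ∧ l + r ≤ n + j) := by
  constructor
  · rintro ⟨π, hmono, hπr, heq⟩
    have hab : π i < π j := hmono hij
    simp only [X, monomial_mul, one_mul] at heq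
    rw [monomial_eq_monomial_iff] at heq
    rcases heq with ⟨heq, -⟩ | ⟨h1, -⟩
    swap
    · exact absurd h1 one_ne_zero
    have hk := DFunLike.congr_fun heq k
    have hl := DFunLike.congr_fun heq l
    have hpi := DFunLike.congr_fun heq (π i)
    have hpj := DFunLike.congr_fun heq (π j)
    simp only [Finsupp.add_apply, Finsupp.single_apply] at hk hl hpi hpj
    have hki : k = π i ∧ l = π j := by
      by_cases h1 : π i = k <;> by_cases h2 : π j = k <;> by_cases h3 : π i = l <;>
        by_cases h4 : π j = l <;> simp_all <;> omega
    obtain ⟨rfl, rfl⟩ := hki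
    have h1 := strictMono_sub_le hmono 0 i (by omega)
    have h2 := strictMono_sub_le hmono i j (le_of_lt hij)
    have h3 := strictMono_sub_le hmono j r hjr
    have h0 : 0 ≤ π 0 := Nat.zero_le _
    refine ⟨by omega, by omega, by omega⟩
  · rintro ⟨h1, h2, h3⟩
    have hjl : j ≤ l := by omega
    refine ⟨fun m => if m ≤ i then m + (k - i) else m + (l - j), ?_, ?_, ?_⟩
    · intro a b hab
      dsimp only
      split_ifs <;> omega
    · simp only [show ¬ r ≤ i by omega, if_false]
      omega
    · simp only [le_refl, if_true, show ¬ j ≤ i by omega, if_false]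
      congr 2 <;> omega
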